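/- Let f(z) = ∑_{j=0}^∞ a_j z^j be an entire function with real coefficients that preserves nonnegativity of n×n matrices (f ∈ F_n). Then a_j ≥ 0 for j = 0, 1, …, n−1. -/
import Mathlib


/-- `f(A) := ∑_{j=0}^∞ a_j A^j` for a square real matrix `A`. -/
noncomputable def fmat (a : ℕ → ℝ) {m : Type*} [Fintype m] [DecidableEq m]
    (A : Matrix m m ℝ) : Matrix m m ℝ :=
  ∑' j : ℕ, a j • A ^ j

/-- Powers of the shift matrix. -/
lemma shift_pow (n : ℕ) (m : ℕ) (i k : Fin n) :
    ((Matrix.of fun i k : Fin n => if (k : ℕ) = (i : ℕ) + 1 then (1 : ℝ) else 0) ^ m) i k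
      = if (k : ℕ) = (i : ℕ) + m then 1 else 0 := by
  induction m generalizing i k with
  | zero => simp [Matrix.one_apply, Fin.ext_iff, eq_comm]
  | succ m ih =>
    rw [pow_succ, Matrix.mul_apply]
    simp only [ih, Matrix.of_apply]
    by_cases hk : (k : ℕ) = (i : ℕ) + (m + 1)
    · have hlt : (i : ℕ) + m < n := by have := k.isLt; omega
      rw [if_pos hk, Finset.sum_eq_single (⟨(i : ℕ) + m, hlt⟩ : Fin n)]
      · simp [hk, Nat.add_assoc]
      · intro b _ hb
        rw [if_neg, zero_mul]
        intro hbv; exact hb (Fin.ext hbv)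
      · simp
    · rw [if_neg hk]
      apply Finset.sum_eq_zero
      intro l _
      by_cases hl : (l : ℕ) = (i : ℕ) + m
      · have hk' : ¬((k : ℕ) = (l : ℕ) + 1) := by omega
        simp [hk']
      · simp [hl]

/-- If `f ∈ F_n` then the first `n` Taylor coefficients of `f` are nonnegative. -/
theorem stmt_1 (a : ℕ → ℝ) (ha : ∀ r : ℝ, Summable fun j : ℕ => |a j| * r ^ j)
    (n : ℕ) (hn : 0 < n)
    (h : ∀ A : Matrix (Fin n) (Fin n) ℝ,
      (∀ i j, 0 ≤ A i j) → ∀ i j, 0 ≤ fmat a A i j) :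
    ∀ j < n, 0 ≤ a j := by
  intro j hj
  set J : Matrix (Fin n) (Fin n) ℝ :=
    Matrix.of (fun i k : Fin n => if (k : ℕ) = (i : ℕ) + 1 then (1 : ℝ) else 0) with hJ
  have hpow : ∀ (m : ℕ) (i k : Fin n),
      (J ^ m) i k = if (k : ℕ) = (i : ℕ) + m then 1 else 0 := shift_pow n
  have hzero : ∀ m ∉ Finset.range n, a m • J ^ m = 0 := by
    intro m hm
    rw [Finset.mem_range, not_lt] at hm
    have hJm : J ^ m = 0 := by
      ext i k
      rw [hpow, if_neg (by have := k.isLt; omega)]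
      rfl
    simp [hJm]
  have hfmat : fmat a J = ∑ m ∈ Finset.range n, a m • J ^ m := tsum_eq_sum hzero
  have hJpos : ∀ i k, 0 ≤ J i k := by
    intro i k
    simp only [hJ, Matrix.of_apply]
    split <;> norm_num
  have hnn := h J hJpos ⟨0, hn⟩ ⟨j, hj⟩
  rw [hfmat] at hnn
  simp only [Matrix.sum_apply, Matrix.smul_apply, smul_eq_mul, hpow] at hnn
  have hsum : ∑ m ∈ Finset.range n,
      a m * (if ((⟨j, hj⟩ : Fin n) : ℕ) = ((⟨0, hn⟩ : Fin n) : ℕ) + m then (1 : ℝ) else 0)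
      = a j := by
    simp only [Fin.val_mk, zero_add, mul_ite, mul_one, mul_zero]
    rw [Finset.sum_ite_eq (Finset.range n) j a, if_pos (Finset.mem_range.mpr hj)]
  rw [hsum] at hnn
  exact hnn
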